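/- Define g^(2) := (S³(V*) ⊗ V) ∩ (V* ⊗ V* ⊗ g) for a Lie subalgebra g ⊆ gl(V), i.e. the space of totally symmetric trilinear maps T : V³ → V such that T(x,y,·) ∈ g for all x,y ∈ V. If g is one of the one-dimensional Lie subalgebras of gl(2,ℝ) spanned by a single endomorphism of rank-related type so(2) = span{(0,-1;1,0)}, so(1,1) = span{(1,0;0,-1)}, the homotheties span{(1,0;0,1)}, span{(1,0;0,λ)} for λ ≠ -1,0,1, co(2)_λ = span{(1,-λ;λ,1)} for λ ≠ 0, or span{(1,1;0,1)}, then the space spanned by {T(x,y,·) : T ∈ g^(2), x,y ∈ V} is a proper subspace of g (in fact zero), so g cannot satisfy the first Berger criterion for holonomy of type V ⊗ ℝ². -/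

import Mathlib

theorem stmt_8 (A : Matrix (Fin 2) (Fin 2) ℝ)
    (hA : A = !![0,-1;1,0] ∨ A = !![1,0;0,-1] ∨ A = !![1,0;0,1] ∨
      (∃ l : ℝ, l ≠ -1 ∧ l ≠ 0 ∧ l ≠ 1 ∧ A = !![1,0;0,l]) ∨
      (∃ l : ℝ, l ≠ 0 ∧ A = !![1,-l;l,1]) ∨ A = !![1,1;0,1]) :
    (∀ T : (Fin 2 → ℝ) →ₗ[ℝ] (Fin 2 → ℝ) →ₗ[ℝ] Module.End ℝ (Fin 2 → ℝ),
      (∀ x y, T x y = T y x) → (∀ x y z, T x y z = T x z y) →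
      (∀ x y, T x y ∈ Submodule.span ℝ {Matrix.toLin' A}) → T = 0) ∧
    Submodule.span ℝ {B : Module.End ℝ (Fin 2 → ℝ) |
        ∃ T : (Fin 2 → ℝ) →ₗ[ℝ] (Fin 2 → ℝ) →ₗ[ℝ] Module.End ℝ (Fin 2 → ℝ),
          (∀ x y, T x y = T y x) ∧ (∀ x y z, T x y z = T x z y) ∧
          (∀ x y, T x y ∈ Submodule.span ℝ {Matrix.toLin' A}) ∧
          ∃ x y, B = T x y}
      < Submodule.span ℝ {Matrix.toLin' A} := by
  have hdet : A.det ≠ 0 := by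
    rcases hA with h|h|h|⟨l,h1,h2,h3,h⟩|⟨l,h1,h⟩|h <;> subst h <;>
      simp [Matrix.det_fin_two_of] <;> [skip; skip] <;> first
        | exact h2
        | nlinarith [sq_nonneg l]
  have hinj : Function.Injective (Matrix.toLin' A) := by
    intro u v huv
    have h1 : A⁻¹ * A = 1 := Matrix.nonsing_inv_mul A (isUnit_iff_ne_zero.mpr hdet)
    have h2 : Matrix.toLin' A⁻¹ (Matrix.toLin' A u) = Matrix.toLin' A⁻¹ (Matrix.toLin' A v) := by
      rw [huv]
    rw [← Matrix.toLin'_mul_apply, ← Matrix.toLin'_mul_apply, h1, Matrix.toLin'_one] at h2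
    simpa using h2
  set e0 : Fin 2 → ℝ := ![1,0] with he0
  set e1 : Fin 2 → ℝ := ![0,1] with he1
  have key : ∀ T : (Fin 2 → ℝ) →ₗ[ℝ] (Fin 2 → ℝ) →ₗ[ℝ] Module.End ℝ (Fin 2 → ℝ),
      (∀ x y, T x y = T y x) → (∀ x y z, T x y z = T x z y) →
      (∀ x y, T x y ∈ Submodule.span ℝ {Matrix.toLin' A}) → T = 0 := by
    intro T hsym hsym2 hmem
    have hzero : ∀ x y, T x y = 0 := by
      intro x y
      obtain ⟨c0, hc0⟩ := Submodule.mem_span_singleton.mp (hmem x e0)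
      obtain ⟨c1, hc1⟩ := Submodule.mem_span_singleton.mp (hmem x e1)
      have h01 : T x e0 e1 = T x e1 e0 := hsym2 x e0 e1
      rw [← hc0, ← hc1] at h01
      have h2 : Matrix.toLin' A (c0 • e1) = Matrix.toLin' A (c1 • e0) := by
        simpa using h01
      have h3 : c0 • e1 = c1 • e0 := hinj h2
      have hc0z : c0 = 0 := by
        have := congrFun h3 1
        simpa [he0, he1] using this
      have hc1z : c1 = 0 := by
        have := congrFun h3 0
        simpa [he0, he1, eq_comm] using this
      have hy : y = y 0 • e0 + y 1 • e1 := by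
        funext i
        fin_cases i <;> simp [he0, he1]
      have hT0 : T x e0 = 0 := by rw [← hc0, hc0z, zero_smul]
      have hT1 : T x e1 = 0 := by rw [← hc1, hc1z, zero_smul]
      rw [hy, map_add, map_smul, map_smul, hT0, hT1]
      simp
    ext x y v
    simp [hzero]
  refine ⟨key, ?_⟩
  have hS : Submodule.span ℝ {B : Module.End ℝ (Fin 2 → ℝ) |
        ∃ T : (Fin 2 → ℝ) →ₗ[ℝ] (Fin 2 → ℝ) →ₗ[ℝ] Module.End ℝ (Fin 2 → ℝ),
          (∀ x y, T x y = T y x) ∧ (∀ x y z, T x y z = T x z y) ∧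
          (∀ x y, T x y ∈ Submodule.span ℝ {Matrix.toLin' A}) ∧
          ∃ x y, B = T x y} = ⊥ := by
    rw [Submodule.span_eq_bot]
    rintro B ⟨T, h1, h2, h3, x, y, rfl⟩
    rw [key T h1 h2 h3]
    simp
  rw [hS, bot_lt_iff_ne_bot, Ne, Submodule.span_singleton_eq_bot]
  intro h
  have h0 : Matrix.toLin' A e0 = Matrix.toLin' A 0 := by rw [h]; simp
  have := congrFun (hinj h0) 0
  simp [he0] at this
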